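/- Let A and J be N×N complex matrices such that Aᴴ·J + J·A = 0, and let p be an odd polynomial with real coefficients (p(−x) = −p(x)). Then the exponential of p(A) belongs to the quadratic Lie group associated with J: (e^{p(A)})ᴴ · J · e^{p(A)} = J. -/

import Mathlib

open Matrix Polynomial

lemma coeff_comp_neg_X (p : Polynomial ℝ) (n : ℕ) :
    (p.comp (-X)).coeff n = (-1) ^ n * p.coeff n := by
  rw [Polynomial.comp_eq_sum_left, Polynomial.sum]
  rw [Polynomial.finset_sum_coeff]
  have : ∀ e ∈ p.support, (Polynomial.C (p.coeff e) * (-X) ^ e).coeff n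
      = if e = n then (-1) ^ n * p.coeff n else 0 := by
    intro e _
    have h2 : Polynomial.C (p.coeff e) * (-X) ^ e
        = Polynomial.C ((-1) ^ e * p.coeff e) * X ^ e := by
      rw [neg_pow, Polynomial.C_mul, Polynomial.C_pow, Polynomial.C_neg, Polynomial.C_1]; ring
    rw [h2, Polynomial.coeff_C_mul, Polynomial.coeff_X_pow]
    by_cases he : e = n
    · subst he; simp [mul_comm]
    · simp [he, Ne.symm he]
  rw [Finset.sum_congr rfl this]
  by_cases hn : n ∈ p.support
  · rw [Finset.sum_ite_eq' p.support n (fun _ => (-1) ^ n * p.coeff n), if_pos hn]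
  · rw [Finset.sum_ite_eq' p.support n (fun _ => (-1) ^ n * p.coeff n), if_neg hn]
    rw [Polynomial.notMem_support_iff.mp hn, mul_zero]

lemma exp_intertwine {N : ℕ} (X Y J : Matrix (Fin N) (Fin N) ℂ) (h : X * J = J * Y) :
    NormedSpace.exp X * J = J * NormedSpace.exp Y := by
  letI : SeminormedRing (Matrix (Fin N) (Fin N) ℂ) := Matrix.linftyOpSemiNormedRing
  letI : NormedRing (Matrix (Fin N) (Fin N) ℂ) := Matrix.linftyOpNormedRing
  letI : NormedAlgebra ℂ (Matrix (Fin N) (Fin N) ℂ) := Matrix.linftyOpNormedAlgebra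
  have hn : ∀ n : ℕ, X ^ n * J = J * Y ^ n := by
    intro n
    induction n with
    | zero => simp
    | succ n ih =>
      rw [pow_succ', pow_succ', mul_assoc, ih, ← mul_assoc, h, mul_assoc]
  simp only [NormedSpace.exp_eq_tsum (𝕂 := ℂ)]
  erw [← (NormedSpace.expSeries_summable' (𝕂 := ℂ) X).tsum_mul_right J,
    ← (NormedSpace.expSeries_summable' (𝕂 := ℂ) Y).tsum_mul_left J]
  congr 1
  funext n
  rw [smul_mul_assoc, hn, mul_smul_comm]

/-- If `A` belongs to the quadratic Lie algebra of `J` and `p` is an odd real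
polynomial, then `e^{p(A)}` belongs to the quadratic Lie group of `J`. -/
theorem exp_odd_poly_mem_quadratic_lie_group (N : ℕ) (A J : Matrix (Fin N) (Fin N) ℂ)
    (hA : Aᴴ * J + J * A = 0) (p : Polynomial ℝ)
    (hodd : ∀ x : ℝ, p.eval (-x) = -p.eval x) :
    (NormedSpace.exp (Polynomial.aeval A p))ᴴ * J * NormedSpace.exp (Polynomial.aeval A p) = J := by
  have hAJ : Aᴴ * J = -(J * A) := eq_neg_of_add_eq_zero_left hA
  -- even coefficients vanish
  have hcomp : p.comp (-X) = -p := by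
    apply Polynomial.funext
    intro x
    simp [Polynomial.eval_comp, hodd]
  have hcoeff : ∀ n : ℕ, Even n → p.coeff n = 0 := by
    intro n hn
    have h1 := coeff_comp_neg_X p n
    rw [hcomp, Polynomial.coeff_neg, hn.neg_one_pow, one_mul] at h1
    linarith
  -- powers intertwine
  have hpow : ∀ n : ℕ, (Aᴴ) ^ n * J = ((-1 : ℂ) ^ n) • (J * A ^ n) := by
    intro n
    induction n with
    | zero => simp
    | succ n ih =>
      rw [pow_succ', mul_assoc, ih, mul_smul_comm, ← mul_assoc, hAJ, pow_succ,
        pow_succ']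
      rw [neg_mul, smul_neg, ← neg_smul, ← mul_assoc]
      ring_nf
  set B := Polynomial.aeval A p with hB
  have hBJ : Bᴴ * J = J * (-B) := by
    rw [hB, Polynomial.aeval_eq_sum_range (R := ℝ)]
    rw [Matrix.conjTranspose_sum]
    simp_rw [Matrix.conjTranspose_smul, Matrix.conjTranspose_pow, star_trivial]
    rw [Finset.sum_mul, mul_neg, Finset.mul_sum, ← Finset.sum_neg_distrib]
    apply Finset.sum_congr rfl
    intro i _
    rw [smul_mul_assoc, hpow]
    by_cases hc : p.coeff i = 0
    · simp [hc]
    · have hi : ¬ Even i := fun h => hc (hcoeff i h)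
      rw [(Nat.not_even_iff_odd.mp hi).neg_one_pow]
      rw [mul_smul_comm, neg_one_smul, smul_neg]
  have h1 : Bᴴ * J = J * (-B) := hBJ
  have h2 : NormedSpace.exp Bᴴ * J = J * NormedSpace.exp (-B) :=
    exp_intertwine _ _ _ h1
  have hct : NormedSpace.exp Bᴴ = (NormedSpace.exp B)ᴴ :=
    Matrix.exp_conjTranspose B
  calc (NormedSpace.exp B)ᴴ * J * NormedSpace.exp B
      = NormedSpace.exp Bᴴ * J * NormedSpace.exp B := by rw [hct]
    _ = J * NormedSpace.exp (-B) * NormedSpace.exp B := by rw [h2]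
    _ = J := by
        rw [mul_assoc, ← Matrix.exp_add_of_commute (-B) B (Commute.neg_left rfl),
          neg_add_cancel, NormedSpace.exp_zero, mul_one]
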